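/- For every unit vector n^i in ℝ³, the symmetric linear boundary operator Ã_n on the 33-dimensional space Ṽ has exactly six positive eigenvalues, twenty-one zero eigenvalues, and six negative eigenvalues, counted with multiplicity. -/

import Mathlib

open scoped BigOperators Classical

/-- The 39-dimensional ambient space of quadruples `(g_ij, K_ij, f_kij, p_i)` of
constant tensors (no symmetry imposed). -/
abbrev Wt : Type :=
  (Fin 3 → Fin 3 → ℝ) × (Fin 3 → Fin 3 → ℝ) × (Fin 3 → Fin 3 → Fin 3 → ℝ) × (Fin 3 → ℝ)

private lemma sum1_mul (c : ℝ) (coef w : Fin 3 → ℝ) :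
    ∑ i, coef i * (c * w i) = c * ∑ i, coef i * w i := by
  simp [Finset.mul_sum, mul_left_comm]

private lemma sum2_mul (c : ℝ) (coef w : Fin 3 → Fin 3 → ℝ) :
    ∑ i, ∑ j, coef i j * (c * w i j) = c * ∑ i, ∑ j, coef i j * w i j := by
  simp [Finset.mul_sum, mul_left_comm]

private lemma sum3_mul (c : ℝ) (coef w : Fin 3 → Fin 3 → Fin 3 → ℝ) :
    ∑ k, ∑ i, ∑ j, coef k i j * (c * w k i j)
      = c * ∑ k, ∑ i, ∑ j, coef k i j * w k i j := by
  simp [Finset.mul_sum, mul_left_comm]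

/-- The 33-dimensional subspace `Ṽ` of `Wt` consisting of quadruples with `g`, `K`,
and `f` symmetric in the indices `i` and `j`. -/
def Vtsub : Submodule ℝ Wt where
  carrier := {v | (∀ i j, v.1 i j = v.1 j i) ∧ (∀ i j, v.2.1 i j = v.2.1 j i) ∧
    (∀ k i j, v.2.2.1 k i j = v.2.2.1 k j i)}
  add_mem' := by
    rintro a b ⟨a1, a2, a3⟩ ⟨b1, b2, b3⟩
    refine ⟨fun i j => ?_, fun i j => ?_, fun k i j => ?_⟩ <;>
      simp only [Prod.fst_add, Prod.snd_add, Pi.add_apply] <;>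
      [rw [a1 i j, b1 i j]; rw [a2 i j, b2 i j]; rw [a3 k i j, b3 k i j]]
  zero_mem' := ⟨fun _ _ => rfl, fun _ _ => rfl, fun _ _ _ => rfl⟩
  smul_mem' := by
    rintro c a ⟨a1, a2, a3⟩
    refine ⟨fun i j => ?_, fun i j => ?_, fun k i j => ?_⟩ <;>
      simp only [Prod.smul_fst, Prod.smul_snd, Pi.smul_apply] <;>
      [rw [a1 i j]; rw [a2 i j]; rw [a3 k i j]]

/-- The extended boundary operator `Ã_n`:
`g̃_ij = 0`, `K̃_ij = n^k f_kij − (1/2)(n_i p_j + n_j p_i) + n^k p_k δ_ij`,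
`f̃_kij = n_k K_ij`, `p̃_i = −n^l K_il + n_i K_l^l`. -/
noncomputable def bopt (n : Fin 3 → ℝ) (v : Wt) : Wt :=
  (0,
   fun i j => (∑ k, n k * v.2.2.1 k i j)
     - (1 / 2) * (n i * v.2.2.2 j + n j * v.2.2.2 i)
     + (∑ k, n k * v.2.2.2 k) * (if i = j then 1 else 0),
   fun k i j => n k * v.2.1 i j,
   fun i => -(∑ l, n l * v.2.1 i l) + n i * ∑ l, v.2.1 l l)

/-- The inner product on `Wt` obtained by summing the componentwise products of all
entries. -/
def ipt (v w : Wt) : ℝ :=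
  (∑ i, ∑ j, v.1 i j * w.1 i j) + (∑ i, ∑ j, v.2.1 i j * w.2.1 i j)
    + (∑ k, ∑ i, ∑ j, v.2.2.1 k i j * w.2.2.1 k i j) + (∑ i, v.2.2.2 i * w.2.2.2 i)

/-- The orthogonal projection `τ_i^j = δ_i^j − n_i n^j` onto the plane orthogonal
to `n`. -/
def tau (n : Fin 3 → ℝ) (i j : Fin 3) : ℝ := (if i = j then 1 else 0) - n i * n j

namespace BC

/-- symmetric-matrix basis used in the g-block and f-kernel block -/
def SB (n a b : Fin 3 → ℝ) : Fin 6 → (Fin 3 → Fin 3 → ℝ) :=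
  ![fun i j => n i * n j, fun i j => a i * a j, fun i j => b i * b j,
    fun i j => n i * a j + n j * a i, fun i j => n i * b j + n j * b i,
    fun i j => a i * b j + a j * b i]

def uF (a b : Fin 3 → ℝ) : Fin 2 → (Fin 3 → ℝ) := ![a, b]

noncomputable def ME (n a b : Fin 3 → ℝ) : Fin 3 → (Fin 3 → Fin 3 → ℝ) :=
  ![fun i j => n i * n j - (if i = j then 1 else 0),
    fun i j => (n i * a j + n j * a i) / 2,
    fun i j => (n i * b j + n j * b i) / 2]

def pP (n a b : Fin 3 → ℝ) : Fin 3 → (Fin 3 → ℝ) := ![n, a, b]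

def KE (n a b : Fin 3 → ℝ) : Fin 6 → (Fin 3 → Fin 3 → ℝ) :=
  ![fun i j => n i * n j, fun i j => a i * a j - b i * b j,
    fun i j => a i * b j + a j * b i,
    fun i j => n i * a j + n j * a i, fun i j => n i * b j + n j * b i,
    fun i j => (if i = j then 1 else 0) - n i * n j]

noncomputable def cE : Fin 6 → ℝ :=
  ![1, 1, 1, Real.sqrt 6 / 3, Real.sqrt 6 / 3, Real.sqrt 3 / 3]

noncomputable def sE : Fin 6 → ℝ :=
  ![1, 1, 1, Real.sqrt 6 / 2, Real.sqrt 6 / 2, Real.sqrt 3]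

def qE (n a b : Fin 3 → ℝ) : Fin 6 → (Fin 3 → ℝ) :=
  ![0, 0, 0, fun i => -a i, fun i => -b i, fun i => 2 * n i]

def VG (n a b : Fin 3 → ℝ) (t : Fin 6) : Wt := (SB n a b t, 0, 0, 0)

def VF (n a b : Fin 3 → ℝ) (c : Fin 2) (t : Fin 6) : Wt :=
  (0, 0, fun k i j => uF a b c k * SB n a b t i j, 0)

noncomputable def VP (n a b : Fin 3 → ℝ) (r : Fin 3) : Wt :=
  (0, 0, fun k i j => n k * ME n a b r i j, pP n a b r)

noncomputable def VE (n a b : Fin 3 → ℝ) (ε : ℝ) (t : Fin 6) : Wt :=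
  (0, KE n a b t, fun k i j => ε * cE t * (n k * KE n a b t i j),
   fun i => ε * cE t * qE n a b t i)

section eig
variable (n a b : Fin 3 → ℝ) (ε : ℝ)

lemma eigG (t : Fin 6) : bopt n (VG n a b t) = (0 : ℝ) • (VG n a b t) := by
  rw [zero_smul]
  refine Prod.ext rfl (Prod.ext ?_ (Prod.ext ?_ ?_)) <;> ext <;>
    simp [bopt, VG]

lemma eigF (u : Fin 3 → ℝ) (hnu : n 0 * u 0 + n 1 * u 1 + n 2 * u 2 = 0)
    (S : Fin 3 → Fin 3 → ℝ) :
    bopt n ((0, 0, fun k i j => u k * S i j, 0) : Wt)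
      = (0 : ℝ) • ((0, 0, fun k i j => u k * S i j, 0) : Wt) := by
  rw [zero_smul]
  refine Prod.ext rfl (Prod.ext ?_ (Prod.ext ?_ ?_))
  · funext i j
    simp only [bopt, Pi.zero_apply, Fin.sum_univ_three, Prod.fst, Prod.snd]
    show _ = (0 : ℝ)
    linear_combination (S i j) * hnu
  · ext k i j; simp [bopt]
  · ext i; simp [bopt]
end eig
section evals
variable (n a b : Fin 3 → ℝ)
@[simp] lemma SB_0 : SB n a b 0 = fun i j => n i * n j := rfl
@[simp] lemma SB_1 : SB n a b 1 = fun i j => a i * a j := rfl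
@[simp] lemma SB_2 : SB n a b 2 = fun i j => b i * b j := rfl
@[simp] lemma SB_3 : SB n a b 3 = fun i j => n i * a j + n j * a i := rfl
@[simp] lemma SB_4 : SB n a b 4 = fun i j => n i * b j + n j * b i := rfl
@[simp] lemma SB_5 : SB n a b 5 = fun i j => a i * b j + a j * b i := rfl
@[simp] lemma KE_0 : KE n a b 0 = fun i j => n i * n j := rfl
@[simp] lemma KE_1 : KE n a b 1 = fun i j => a i * a j - b i * b j := rfl
@[simp] lemma KE_2 : KE n a b 2 = fun i j => a i * b j + a j * b i := rfl
@[simp] lemma KE_3 : KE n a b 3 = fun i j => n i * a j + n j * a i := rfl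
@[simp] lemma KE_4 : KE n a b 4 = fun i j => n i * b j + n j * b i := rfl
@[simp] lemma KE_5 : KE n a b 5 = fun i j => (if i = j then 1 else 0) - n i * n j := rfl
@[simp] lemma cE_0 : cE 0 = 1 := rfl
@[simp] lemma cE_1 : cE 1 = 1 := rfl
@[simp] lemma cE_2 : cE 2 = 1 := rfl
@[simp] lemma cE_3 : cE 3 = Real.sqrt 6 / 3 := rfl
@[simp] lemma cE_4 : cE 4 = Real.sqrt 6 / 3 := rfl
@[simp] lemma cE_5 : cE 5 = Real.sqrt 3 / 3 := rfl
@[simp] lemma sE_0 : sE 0 = 1 := rfl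
@[simp] lemma sE_1 : sE 1 = 1 := rfl
@[simp] lemma sE_2 : sE 2 = 1 := rfl
@[simp] lemma sE_3 : sE 3 = Real.sqrt 6 / 2 := rfl
@[simp] lemma sE_4 : sE 4 = Real.sqrt 6 / 2 := rfl
@[simp] lemma sE_5 : sE 5 = Real.sqrt 3 := rfl
@[simp] lemma qE_0 : qE n a b 0 = 0 := rfl
@[simp] lemma qE_1 : qE n a b 1 = 0 := rfl
@[simp] lemma qE_2 : qE n a b 2 = 0 := rfl
@[simp] lemma qE_3 : qE n a b 3 = fun i => -a i := rfl
@[simp] lemma qE_4 : qE n a b 4 = fun i => -b i := rfl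
@[simp] lemma qE_5 : qE n a b 5 = fun i => 2 * n i := rfl
@[simp] lemma ME_0 : ME n a b 0 = fun i j => n i * n j - (if i = j then 1 else 0) := rfl
@[simp] lemma ME_1 : ME n a b 1 = fun i j => (n i * a j + n j * a i) / 2 := rfl
@[simp] lemma ME_2 : ME n a b 2 = fun i j => (n i * b j + n j * b i) / 2 := rfl
@[simp] lemma pP_0 : pP n a b 0 = n := rfl
@[simp] lemma pP_1 : pP n a b 1 = a := rfl
@[simp] lemma pP_2 : pP n a b 2 = b := rfl
@[simp] lemma uF_0 : uF a b 0 = a := rfl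
@[simp] lemma uF_1 : uF a b 1 = b := rfl
end evals

section eig2
variable (n a b : Fin 3 → ℝ) (ε : ℝ)

lemma eigP0 (hnn : n 0 * n 0 + n 1 * n 1 + n 2 * n 2 = 1) :
    bopt n (VP n a b 0) = (0 : ℝ) • (VP n a b 0) := by
  rw [zero_smul]
  refine Prod.ext rfl (Prod.ext ?_ (Prod.ext ?_ ?_))
  · funext i j
    simp only [bopt, VP, ME_0, pP_0, Pi.zero_apply, Fin.sum_univ_three]
    show _ = (0:ℝ)
    linear_combination (n i * n j) * hnn
  · ext k i j; simp [bopt, VP]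
  · ext i; simp [bopt, VP]

lemma eigPu (u : Fin 3 → ℝ) (hnn : n 0 * n 0 + n 1 * n 1 + n 2 * n 2 = 1)
    (hnu : n 0 * u 0 + n 1 * u 1 + n 2 * u 2 = 0) :
    bopt n ((0, 0, fun k i j => n k * ((n i * u j + n j * u i) / 2), u) : Wt)
      = (0 : ℝ) • ((0, 0, fun k i j => n k * ((n i * u j + n j * u i) / 2), u) : Wt) := by
  rw [zero_smul]
  refine Prod.ext rfl (Prod.ext ?_ (Prod.ext ?_ ?_))
  · funext i j
    simp only [bopt, Pi.zero_apply, Fin.sum_univ_three]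
    show _ = (0:ℝ)
    linear_combination ((n i * u j + n j * u i) / 2) * hnn + (if i = j then (1:ℝ) else 0) * hnu
  · ext k i j; simp [bopt]
  · ext i; simp [bopt]

lemma eigE0 (hnn : n 0 * n 0 + n 1 * n 1 + n 2 * n 2 = 1) (hε : ε * ε = 1) :
    bopt n (VE n a b ε 0) = (ε * sE 0) • VE n a b ε 0 := by
  refine Prod.ext ?_ (Prod.ext ?_ (Prod.ext ?_ ?_))
  · ext i j; simp [bopt, VE]
  · funext i j
    simp only [bopt, VE, KE_0, cE_0, sE_0, qE_0, Pi.zero_apply, Fin.sum_univ_three,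
      Prod.smul_snd, Prod.smul_fst, Pi.smul_apply, smul_eq_mul]
    linear_combination (ε * (n i * n j)) * hnn
  · funext k i j
    simp only [bopt, VE, KE_0, cE_0, sE_0, Prod.smul_snd, Prod.smul_fst, Pi.smul_apply,
      smul_eq_mul]
    linear_combination (-(n k * (n i * n j))) * hε
  · funext i
    simp only [bopt, VE, KE_0, cE_0, sE_0, qE_0, Pi.zero_apply, Fin.sum_univ_three,
      Prod.smul_snd, Prod.smul_fst, Pi.smul_apply, smul_eq_mul]
    ring

lemma eigE1 (haa : a 0 * a 0 + a 1 * a 1 + a 2 * a 2 = 1)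
    (hbb : b 0 * b 0 + b 1 * b 1 + b 2 * b 2 = 1)
    (hnn : n 0 * n 0 + n 1 * n 1 + n 2 * n 2 = 1)
    (hna : n 0 * a 0 + n 1 * a 1 + n 2 * a 2 = 0)
    (hnb : n 0 * b 0 + n 1 * b 1 + n 2 * b 2 = 0) (hε : ε * ε = 1) :
    bopt n (VE n a b ε 1) = (ε * sE 1) • VE n a b ε 1 := by
  refine Prod.ext ?_ (Prod.ext ?_ (Prod.ext ?_ ?_))
  · ext i j; simp [bopt, VE]
  · funext i j
    simp only [bopt, VE, KE_1, cE_1, sE_1, qE_1, Pi.zero_apply, Fin.sum_univ_three,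
      Prod.smul_snd, Prod.smul_fst, Pi.smul_apply, smul_eq_mul]
    linear_combination (ε * (a i * a j - b i * b j)) * hnn
  · funext k i j
    simp only [bopt, VE, KE_1, cE_1, sE_1, Prod.smul_snd, Prod.smul_fst, Pi.smul_apply,
      smul_eq_mul]
    linear_combination (-(n k * (a i * a j - b i * b j))) * hε
  · funext i
    simp only [bopt, VE, KE_1, cE_1, sE_1, qE_1, Pi.zero_apply, Fin.sum_univ_three,
      Prod.smul_snd, Prod.smul_fst, Pi.smul_apply, smul_eq_mul]
    linear_combination (-(a i)) * hna + (b i) * hnb + (n i) * haa + (-(n i)) * hbb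

lemma eigE2 (hnn : n 0 * n 0 + n 1 * n 1 + n 2 * n 2 = 1)
    (hna : n 0 * a 0 + n 1 * a 1 + n 2 * a 2 = 0)
    (hnb : n 0 * b 0 + n 1 * b 1 + n 2 * b 2 = 0)
    (hab : a 0 * b 0 + a 1 * b 1 + a 2 * b 2 = 0) (hε : ε * ε = 1) :
    bopt n (VE n a b ε 2) = (ε * sE 2) • VE n a b ε 2 := by
  refine Prod.ext ?_ (Prod.ext ?_ (Prod.ext ?_ ?_))
  · ext i j; simp [bopt, VE]
  · funext i j
    simp only [bopt, VE, KE_2, cE_2, sE_2, qE_2, Pi.zero_apply, Fin.sum_univ_three,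
      Prod.smul_snd, Prod.smul_fst, Pi.smul_apply, smul_eq_mul]
    linear_combination (ε * (a i * b j + a j * b i)) * hnn
  · funext k i j
    simp only [bopt, VE, KE_2, cE_2, sE_2, Prod.smul_snd, Prod.smul_fst, Pi.smul_apply,
      smul_eq_mul]
    linear_combination (-(n k * (a i * b j + a j * b i))) * hε
  · funext i
    simp only [bopt, VE, KE_2, cE_2, sE_2, qE_2, Pi.zero_apply, Fin.sum_univ_three,
      Prod.smul_snd, Prod.smul_fst, Pi.smul_apply, smul_eq_mul]
    linear_combination (-(a i)) * hnb + (-(b i)) * hna + (2 * n i) * hab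

end eig2
section finhelp
lemma f2 : ∀ i : Fin 2, i = 0 ∨ i = 1 := by decide
lemma f3 : ∀ i : Fin 3, i = 0 ∨ i = 1 ∨ i = 2 := by decide
lemma f6 : ∀ i : Fin 6, i = 0 ∨ i = 1 ∨ i = 2 ∨ i = 3 ∨ i = 4 ∨ i = 5 := by decide
end finhelp

section eig3
variable (n a b : Fin 3 → ℝ) (ε : ℝ)

lemma eigE3 (hnn : n 0 * n 0 + n 1 * n 1 + n 2 * n 2 = 1)
    (hna : n 0 * a 0 + n 1 * a 1 + n 2 * a 2 = 0) (hε : ε * ε = 1) :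
    bopt n (VE n a b ε 3) = (ε * sE 3) • VE n a b ε 3 := by
  have h6 : Real.sqrt 6 * Real.sqrt 6 = 6 := Real.mul_self_sqrt (by norm_num)
  refine Prod.ext ?_ (Prod.ext ?_ (Prod.ext ?_ ?_))
  · ext i j; simp [bopt, VE]
  · funext i j
    simp only [bopt, VE, KE_3, cE_3, sE_3, qE_3, Pi.zero_apply, Fin.sum_univ_three,
      Prod.smul_snd, Prod.smul_fst, Pi.smul_apply, smul_eq_mul]
    linear_combination (ε * (Real.sqrt 6 / 3) * (n i * a j + n j * a i)) * hnn
      + (-(ε * (Real.sqrt 6 / 3) * (if i = j then (1:ℝ) else 0))) * hna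
  · funext k i j
    simp only [bopt, VE, KE_3, cE_3, sE_3, Prod.smul_snd, Prod.smul_fst, Pi.smul_apply,
      smul_eq_mul]
    linear_combination (-(Real.sqrt 6 * Real.sqrt 6 / 6) * (n k * (n i * a j + n j * a i))) * hε
      + (-(1 / 6) * (n k * (n i * a j + n j * a i))) * h6
  · funext i
    simp only [bopt, VE, KE_3, cE_3, sE_3, qE_3, Pi.zero_apply, Fin.sum_univ_three,
      Prod.smul_snd, Prod.smul_fst, Pi.smul_apply, smul_eq_mul]
    linear_combination (n i) * hna + (-(a i)) * hnn
      + (a i * (Real.sqrt 6 * Real.sqrt 6 / 6)) * hε + (a i * (1 / 6)) * h6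

lemma eigE4 (hnn : n 0 * n 0 + n 1 * n 1 + n 2 * n 2 = 1)
    (hnb : n 0 * b 0 + n 1 * b 1 + n 2 * b 2 = 0) (hε : ε * ε = 1) :
    bopt n (VE n a b ε 4) = (ε * sE 4) • VE n a b ε 4 := by
  have h6 : Real.sqrt 6 * Real.sqrt 6 = 6 := Real.mul_self_sqrt (by norm_num)
  refine Prod.ext ?_ (Prod.ext ?_ (Prod.ext ?_ ?_))
  · ext i j; simp [bopt, VE]
  · funext i j
    simp only [bopt, VE, KE_4, cE_4, sE_4, qE_4, Pi.zero_apply, Fin.sum_univ_three,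
      Prod.smul_snd, Prod.smul_fst, Pi.smul_apply, smul_eq_mul]
    linear_combination (ε * (Real.sqrt 6 / 3) * (n i * b j + n j * b i)) * hnn
      + (-(ε * (Real.sqrt 6 / 3) * (if i = j then (1:ℝ) else 0))) * hnb
  · funext k i j
    simp only [bopt, VE, KE_4, cE_4, sE_4, Prod.smul_snd, Prod.smul_fst, Pi.smul_apply,
      smul_eq_mul]
    linear_combination (-(Real.sqrt 6 * Real.sqrt 6 / 6) * (n k * (n i * b j + n j * b i))) * hε
      + (-(1 / 6) * (n k * (n i * b j + n j * b i))) * h6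
  · funext i
    simp only [bopt, VE, KE_4, cE_4, sE_4, qE_4, Pi.zero_apply, Fin.sum_univ_three,
      Prod.smul_snd, Prod.smul_fst, Pi.smul_apply, smul_eq_mul]
    linear_combination (n i) * hnb + (-(b i)) * hnn
      + (b i * (Real.sqrt 6 * Real.sqrt 6 / 6)) * hε + (b i * (1 / 6)) * h6

lemma eigE5 (hnn : n 0 * n 0 + n 1 * n 1 + n 2 * n 2 = 1) (hε : ε * ε = 1) :
    bopt n (VE n a b ε 5) = (ε * sE 5) • VE n a b ε 5 := by
  have h3 : Real.sqrt 3 * Real.sqrt 3 = 3 := Real.mul_self_sqrt (by norm_num)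
  refine Prod.ext ?_ (Prod.ext ?_ (Prod.ext ?_ ?_))
  · ext i j; simp [bopt, VE]
  · funext i j
    simp only [bopt, VE, KE_5, cE_5, sE_5, qE_5, Pi.zero_apply, Fin.sum_univ_three,
      Prod.smul_snd, Prod.smul_fst, Pi.smul_apply, smul_eq_mul]
    linear_combination (ε * (Real.sqrt 3 / 3) *
      (((if i = j then (1:ℝ) else 0) - n i * n j) + 2 * (if i = j then (1:ℝ) else 0))) * hnn
  · funext k i j
    simp only [bopt, VE, KE_5, cE_5, sE_5, Prod.smul_snd, Prod.smul_fst, Pi.smul_apply,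
      smul_eq_mul]
    linear_combination (-(Real.sqrt 3 * Real.sqrt 3 / 3) *
        (n k * ((if i = j then (1:ℝ) else 0) - n i * n j))) * hε
      + (-(1 / 3) * (n k * ((if i = j then (1:ℝ) else 0) - n i * n j))) * h3
  · funext i
    simp only [bopt, VE, KE_5, cE_5, sE_5, qE_5, Pi.zero_apply, Fin.sum_univ_three,
      Prod.smul_snd, Prod.smul_fst, Pi.smul_apply, smul_eq_mul]
    rcases f3 i with hi | hi | hi <;> subst hi <;> norm_num [Fin.ext_iff] <;>
      [(linear_combination (-(Real.sqrt 3 * Real.sqrt 3 / 3) * (2 * n 0)) * hε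
        + (-(1 / 3) * (2 * n 0)) * h3);
       (linear_combination (-(Real.sqrt 3 * Real.sqrt 3 / 3) * (2 * n 1)) * hε
        + (-(1 / 3) * (2 * n 1)) * h3);
       (linear_combination (-(Real.sqrt 3 * Real.sqrt 3 / 3) * (2 * n 2)) * hε
        + (-(1 / 3) * (2 * n 2)) * h3)]

lemma memG (t : Fin 6) : VG n a b t ∈ Vtsub := by
  refine ⟨fun i j => ?_, fun i j => rfl, fun k i j => rfl⟩
  rcases f6 t with h | h | h | h | h | h <;> subst h <;>
    simp only [VG, SB_0, SB_1, SB_2, SB_3, SB_4, SB_5] <;> ring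

lemma memF (c : Fin 2) (t : Fin 6) : VF n a b c t ∈ Vtsub := by
  refine ⟨fun i j => rfl, fun i j => rfl, fun k i j => ?_⟩
  rcases f6 t with h | h | h | h | h | h <;> subst h <;>
    simp only [VF, SB_0, SB_1, SB_2, SB_3, SB_4, SB_5] <;> ring

lemma memP (r : Fin 3) : VP n a b r ∈ Vtsub := by
  refine ⟨fun i j => rfl, fun i j => rfl, fun k i j => ?_⟩
  rcases f3 r with h | h | h <;> subst h <;>
    simp only [VP, ME_0, ME_1, ME_2]
  · by_cases h : i = j
    · subst h; ring
    · rw [if_neg h, if_neg (Ne.symm h)]; ring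
  · ring
  · ring

lemma memE (t : Fin 6) : VE n a b ε t ∈ Vtsub := by
  have key : ∀ i j, KE n a b t i j = KE n a b t j i := by
    intro i j
    rcases f6 t with h | h | h | h | h | h <;> subst h <;> simp only [KE_0, KE_1, KE_2, KE_3, KE_4, KE_5]
    case _ => ring
    case _ => ring
    case _ => ring
    case _ => ring
    case _ => ring
    case _ =>
      by_cases h : i = j
      · subst h; ring
      · rw [if_neg h, if_neg (Ne.symm h)]; ring
  exact ⟨fun i j => rfl, fun i j => key i j, fun k i j => by
    show _ * (_ * KE n a b t i j) = _ * (_ * KE n a b t j i); rw [key i j]⟩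
end eig3
section iptmach

lemma ipt_comm (v w : Wt) : ipt v w = ipt w v := by
  simp only [ipt]
  congr 1
  · congr 1
    · congr 1 <;> · apply Finset.sum_congr rfl; intros; apply Finset.sum_congr rfl; intros
                    ring
    · apply Finset.sum_congr rfl; intros
      apply Finset.sum_congr rfl; intros
      apply Finset.sum_congr rfl; intros
      ring
  · apply Finset.sum_congr rfl; intros; ring

def iptL : Wt →ₗ[ℝ] Wt →ₗ[ℝ] ℝ :=
  LinearMap.mk₂ ℝ ipt
    (by intro x y z
        simp only [ipt, Prod.fst_add, Prod.snd_add, Pi.add_apply, add_mul,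
          Finset.sum_add_distrib]
        ring)
    (by intro c x y
        simp only [ipt, Prod.smul_fst, Prod.smul_snd, Pi.smul_apply, smul_eq_mul,
          Finset.mul_sum, mul_assoc]
        simp only [← Finset.mul_sum]
        ring)
    (by intro x y z
        simp only [ipt, Prod.fst_add, Prod.snd_add, Pi.add_apply, mul_add,
          Finset.sum_add_distrib]
        ring)
    (by intro c x y
        simp only [ipt, Prod.smul_fst, Prod.smul_snd, Pi.smul_apply, smul_eq_mul]
        simp only [mul_left_comm _ c _, ← Finset.mul_sum]
        ring)

@[simp] lemma iptL_apply (v w : Wt) : iptL v w = ipt v w := rfl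

lemma li_of_orth {ι : Type*} [Fintype ι] (V : ι → Wt)
    (horth : ∀ i j, i ≠ j → ipt (V i) (V j) = 0) (hnz : ∀ i, ipt (V i) (V i) ≠ 0) :
    LinearIndependent ℝ V := by
  rw [Fintype.linearIndependent_iff]
  intro c hc i
  have h1 : (iptL.flip (V i)) (∑ j, c j • V j) = 0 := by rw [hc]; simp
  rw [map_sum] at h1
  simp only [map_smul, LinearMap.flip_apply, iptL_apply, smul_eq_mul] at h1
  rw [Finset.sum_eq_single i (fun j _ hj => by rw [horth j i hj, mul_zero])
    (fun h => absurd (Finset.mem_univ i) h)] at h1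
  exact (mul_eq_zero.mp h1).resolve_right (hnz i)

lemma bopt_symm (n : Fin 3 → ℝ) (v w : Wt) (hv : v ∈ Vtsub) (hw : w ∈ Vtsub) :
    ipt (bopt n v) w = ipt v (bopt n w) := by
  obtain ⟨-, hv2, -⟩ := hv
  obtain ⟨-, hw2, -⟩ := hw
  simp only [ipt, bopt, Fin.sum_univ_three, Pi.zero_apply, zero_mul, mul_zero]
  norm_num [Fin.ext_iff]
  linear_combination (1/2) * (n 1 * v.2.2.2 0 - n 0 * v.2.2.2 1) * hw2 0 1
    + (1/2) * (n 2 * v.2.2.2 0 - n 0 * v.2.2.2 2) * hw2 0 2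
    + (1/2) * (n 2 * v.2.2.2 1 - n 1 * v.2.2.2 2) * hw2 1 2
    + (1/2) * (n 0 * w.2.2.2 1 - n 1 * w.2.2.2 0) * hv2 0 1
    + (1/2) * (n 0 * w.2.2.2 2 - n 2 * w.2.2.2 0) * hv2 0 2
    + (1/2) * (n 1 * w.2.2.2 2 - n 2 * w.2.2.2 1) * hv2 1 2

lemma orth_ne (n : Fin 3 → ℝ) (v w : Wt) (μ ν : ℝ) (hv : v ∈ Vtsub) (hw : w ∈ Vtsub)
    (hveig : bopt n v = μ • v) (hweig : bopt n w = ν • w) (hne : μ ≠ ν) :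
    ipt v w = 0 := by
  have h1 := bopt_symm n v w hv hw
  rw [hveig, hweig] at h1
  have h2 : μ * ipt v w = ν * ipt v w := by
    have a1 : ipt (μ • v) w = μ * ipt v w := by
      rw [← iptL_apply, map_smul]; simp
    have a2 : ipt v (ν • w) = ν * ipt v w := by
      rw [← iptL_apply, map_smul]; simp
    rw [a1, a2] at h1; exact h1
  by_contra hne2
  exact hne (mul_right_cancel₀ hne2 h2)

end iptmach
section values
variable (n a b : Fin 3 → ℝ)

@[simp] lemma kd00 : (if (0:Fin 3) = 0 then (1:ℝ) else 0) = 1 := by rw [if_pos rfl]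
@[simp] lemma kd11 : (if (1:Fin 3) = 1 then (1:ℝ) else 0) = 1 := by rw [if_pos rfl]
@[simp] lemma kd22 : (if (2:Fin 3) = 2 then (1:ℝ) else 0) = 1 := by rw [if_pos rfl]
@[simp] lemma kd01 : (if (0:Fin 3) = 1 then (1:ℝ) else 0) = 0 := by rw [if_neg (by decide)]
@[simp] lemma kd02 : (if (0:Fin 3) = 2 then (1:ℝ) else 0) = 0 := by rw [if_neg (by decide)]
@[simp] lemma kd10 : (if (1:Fin 3) = 0 then (1:ℝ) else 0) = 0 := by rw [if_neg (by decide)]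
@[simp] lemma kd12 : (if (1:Fin 3) = 2 then (1:ℝ) else 0) = 0 := by rw [if_neg (by decide)]
@[simp] lemma kd20 : (if (2:Fin 3) = 0 then (1:ℝ) else 0) = 0 := by rw [if_neg (by decide)]
@[simp] lemma kd21 : (if (2:Fin 3) = 1 then (1:ℝ) else 0) = 0 := by rw [if_neg (by decide)]

lemma ip3f (u u' : Fin 3 → ℝ) (S S' : Fin 3 → Fin 3 → ℝ) :
    (∑ k, ∑ i, ∑ j, (u k * S i j) * (u' k * S' i j))
      = (∑ k, u k * u' k) * (∑ i, ∑ j, S i j * S' i j) := by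
  simp only [Fin.sum_univ_three]; ring

lemma ip3f2 (α β : ℝ) (u u' : Fin 3 → ℝ) (S S' : Fin 3 → Fin 3 → ℝ) :
    (∑ k, ∑ i, ∑ j, (α * (u k * S i j)) * (β * (u' k * S' i j)))
      = α * β * ((∑ k, u k * u' k) * (∑ i, ∑ j, S i j * S' i j)) := by
  simp only [Fin.sum_univ_three]; ring

lemma ip3fr (β : ℝ) (u u' : Fin 3 → ℝ) (S S' : Fin 3 → Fin 3 → ℝ) :
    (∑ k, ∑ i, ∑ j, (u k * S i j) * (β * (u' k * S' i j)))
      = β * ((∑ k, u k * u' k) * (∑ i, ∑ j, S i j * S' i j)) := by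
  simp only [Fin.sum_univ_three]; ring

lemma ip3fl (β : ℝ) (u u' : Fin 3 → ℝ) (S S' : Fin 3 → Fin 3 → ℝ) :
    (∑ k, ∑ i, ∑ j, (β * (u k * S i j)) * (u' k * S' i j))
      = β * ((∑ k, u k * u' k) * (∑ i, ∑ j, S i j * S' i j)) := by
  simp only [Fin.sum_univ_three]; ring

lemma ip1f2 (α β : ℝ) (q q' : Fin 3 → ℝ) :
    (∑ i, (α * q i) * (β * q' i)) = α * β * (∑ i, q i * q' i) := by
  simp only [Fin.sum_univ_three]; ring

def vK6 : Fin 6 → ℝ := ![1, 2, 2, 2, 2, 2]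
def vS6 : Fin 6 → ℝ := ![1, 1, 1, 2, 2, 2]
def vq6 : Fin 6 → ℝ := ![0, 0, 0, 1, 1, 4]
def vE6 : Fin 6 → ℝ := ![2, 4, 4, 4, 4, 4]
noncomputable def vM3 : Fin 3 → ℝ := ![2, 1/2, 1/2]
@[simp] lemma vK6_0 : vK6 0 = 1 := rfl
@[simp] lemma vK6_1 : vK6 1 = 2 := rfl
@[simp] lemma vK6_2 : vK6 2 = 2 := rfl
@[simp] lemma vK6_3 : vK6 3 = 2 := rfl
@[simp] lemma vK6_4 : vK6 4 = 2 := rfl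
@[simp] lemma vK6_5 : vK6 5 = 2 := rfl
@[simp] lemma vS6_0 : vS6 0 = 1 := rfl
@[simp] lemma vS6_1 : vS6 1 = 1 := rfl
@[simp] lemma vS6_2 : vS6 2 = 1 := rfl
@[simp] lemma vS6_3 : vS6 3 = 2 := rfl
@[simp] lemma vS6_4 : vS6 4 = 2 := rfl
@[simp] lemma vS6_5 : vS6 5 = 2 := rfl
@[simp] lemma vq6_0 : vq6 0 = 0 := rfl
@[simp] lemma vq6_1 : vq6 1 = 0 := rfl
@[simp] lemma vq6_2 : vq6 2 = 0 := rfl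
@[simp] lemma vq6_3 : vq6 3 = 1 := rfl
@[simp] lemma vq6_4 : vq6 4 = 1 := rfl
@[simp] lemma vq6_5 : vq6 5 = 4 := rfl
@[simp] lemma vE6_0 : vE6 0 = 2 := rfl
@[simp] lemma vE6_1 : vE6 1 = 4 := rfl
@[simp] lemma vE6_2 : vE6 2 = 4 := rfl
@[simp] lemma vE6_3 : vE6 3 = 4 := rfl
@[simp] lemma vE6_4 : vE6 4 = 4 := rfl
@[simp] lemma vE6_5 : vE6 5 = 4 := rfl
@[simp] lemma vM3_0 : vM3 0 = 2 := rfl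
@[simp] lemma vM3_1 : vM3 1 = 1/2 := rfl
@[simp] lemma vM3_2 : vM3 2 = 1/2 := rfl

lemma SBo (hnn : n 0 * n 0 + n 1 * n 1 + n 2 * n 2 = 1)
    (haa : a 0 * a 0 + a 1 * a 1 + a 2 * a 2 = 1)
    (hbb : b 0 * b 0 + b 1 * b 1 + b 2 * b 2 = 1)
    (hna : n 0 * a 0 + n 1 * a 1 + n 2 * a 2 = 0)
    (hnb : n 0 * b 0 + n 1 * b 1 + n 2 * b 2 = 0)
    (hab : a 0 * b 0 + a 1 * b 1 + a 2 * b 2 = 0) :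
    ∀ t t' : Fin 6, t ≠ t' → (∑ i, ∑ j, SB n a b t i j * SB n a b t' i j) = 0 := by
  intro t t' hne
  rcases f6 t with h | h | h | h | h | h <;> subst h <;>
    rcases f6 t' with h | h | h | h | h | h <;> subst h <;>
    simp only [SB_0, SB_1, SB_2, SB_3, SB_4, SB_5, Fin.sum_univ_three, kd00, kd01, kd02, kd10, kd11, kd12, kd20, kd21, kd22, eq_self_iff_true, if_true]
  · exact absurd rfl hne
  · linear_combination (n 0 * a 0 + n 1 * a 1 + n 2 * a 2) * hna
  · linear_combination (n 0 * b 0 + n 1 * b 1 + n 2 * b 2) * hnb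
  · linear_combination (2 * (n 0 * n 0 + n 1 * n 1 + n 2 * n 2)) * hna
  · linear_combination (2 * (n 0 * n 0 + n 1 * n 1 + n 2 * n 2)) * hnb
  · linear_combination (2 * (n 0 * a 0 + n 1 * a 1 + n 2 * a 2)) * hnb
  · linear_combination (n 0 * a 0 + n 1 * a 1 + n 2 * a 2) * hna
  · exact absurd rfl hne
  · linear_combination (a 0 * b 0 + a 1 * b 1 + a 2 * b 2) * hab
  · linear_combination (2 * (a 0 * a 0 + a 1 * a 1 + a 2 * a 2)) * hna
  · linear_combination (2 * (a 0 * b 0 + a 1 * b 1 + a 2 * b 2)) * hna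
  · linear_combination (2 * (a 0 * a 0 + a 1 * a 1 + a 2 * a 2)) * hab
  · linear_combination (n 0 * b 0 + n 1 * b 1 + n 2 * b 2) * hnb
  · linear_combination (a 0 * b 0 + a 1 * b 1 + a 2 * b 2) * hab
  · exact absurd rfl hne
  · linear_combination (2 * (a 0 * b 0 + a 1 * b 1 + a 2 * b 2)) * hnb
  · linear_combination (2 * (b 0 * b 0 + b 1 * b 1 + b 2 * b 2)) * hnb
  · linear_combination (2 * (b 0 * b 0 + b 1 * b 1 + b 2 * b 2)) * hab
  · linear_combination (2 * (n 0 * n 0 + n 1 * n 1 + n 2 * n 2)) * hna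
  · linear_combination (2 * (a 0 * a 0 + a 1 * a 1 + a 2 * a 2)) * hna
  · linear_combination (2 * (a 0 * b 0 + a 1 * b 1 + a 2 * b 2)) * hnb
  · exact absurd rfl hne
  · linear_combination (2 * (n 0 * n 0 + n 1 * n 1 + n 2 * n 2)) * hab + (2 * (n 0 * a 0 + n 1 * a 1 + n 2 * a 2)) * hnb
  · linear_combination (2 * (n 0 * a 0 + n 1 * a 1 + n 2 * a 2)) * hab + (2 * (a 0 * a 0 + a 1 * a 1 + a 2 * a 2)) * hnb
  · linear_combination (2 * (n 0 * n 0 + n 1 * n 1 + n 2 * n 2)) * hnb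
  · linear_combination (2 * (a 0 * b 0 + a 1 * b 1 + a 2 * b 2)) * hna
  · linear_combination (2 * (b 0 * b 0 + b 1 * b 1 + b 2 * b 2)) * hnb
  · linear_combination (2 * (n 0 * n 0 + n 1 * n 1 + n 2 * n 2)) * hab + (2 * (n 0 * a 0 + n 1 * a 1 + n 2 * a 2)) * hnb
  · exact absurd rfl hne
  · linear_combination (2 * (n 0 * b 0 + n 1 * b 1 + n 2 * b 2)) * hab + (2 * (b 0 * b 0 + b 1 * b 1 + b 2 * b 2)) * hna
  · linear_combination (2 * (n 0 * a 0 + n 1 * a 1 + n 2 * a 2)) * hnb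
  · linear_combination (2 * (a 0 * a 0 + a 1 * a 1 + a 2 * a 2)) * hab
  · linear_combination (2 * (b 0 * b 0 + b 1 * b 1 + b 2 * b 2)) * hab
  · linear_combination (2 * (n 0 * a 0 + n 1 * a 1 + n 2 * a 2)) * hab + (2 * (a 0 * a 0 + a 1 * a 1 + a 2 * a 2)) * hnb
  · linear_combination (2 * (n 0 * b 0 + n 1 * b 1 + n 2 * b 2)) * hab + (2 * (b 0 * b 0 + b 1 * b 1 + b 2 * b 2)) * hna
  · exact absurd rfl hne

lemma SBd (hnn : n 0 * n 0 + n 1 * n 1 + n 2 * n 2 = 1)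
    (haa : a 0 * a 0 + a 1 * a 1 + a 2 * a 2 = 1)
    (hbb : b 0 * b 0 + b 1 * b 1 + b 2 * b 2 = 1)
    (hna : n 0 * a 0 + n 1 * a 1 + n 2 * a 2 = 0)
    (hnb : n 0 * b 0 + n 1 * b 1 + n 2 * b 2 = 0)
    (hab : a 0 * b 0 + a 1 * b 1 + a 2 * b 2 = 0) :
    ∀ t : Fin 6, (∑ i, ∑ j, SB n a b t i j * SB n a b t i j) = vS6 t := by
  intro t
  rcases f6 t with h | h | h | h | h | h <;> subst h <;>
    simp only [SB_0, SB_1, SB_2, SB_3, SB_4, SB_5, Fin.sum_univ_three, kd00, kd01, kd02, kd10, kd11, kd12, kd20, kd21, kd22, eq_self_iff_true, if_true, vS6_0, vS6_1, vS6_2, vS6_3, vS6_4, vS6_5]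
  · linear_combination ((n 0 * n 0 + n 1 * n 1 + n 2 * n 2) + 1) * hnn
  · linear_combination ((a 0 * a 0 + a 1 * a 1 + a 2 * a 2) + 1) * haa
  · linear_combination ((b 0 * b 0 + b 1 * b 1 + b 2 * b 2) + 1) * hbb
  · linear_combination 2 * hnn + (2 * (n 0 * n 0 + n 1 * n 1 + n 2 * n 2)) * haa + (2 * (n 0 * a 0 + n 1 * a 1 + n 2 * a 2)) * hna
  · linear_combination 2 * hnn + (2 * (n 0 * n 0 + n 1 * n 1 + n 2 * n 2)) * hbb + (2 * (n 0 * b 0 + n 1 * b 1 + n 2 * b 2)) * hnb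
  · linear_combination 2 * haa + (2 * (a 0 * a 0 + a 1 * a 1 + a 2 * a 2)) * hbb + (2 * (a 0 * b 0 + a 1 * b 1 + a 2 * b 2)) * hab

lemma KEo (hnn : n 0 * n 0 + n 1 * n 1 + n 2 * n 2 = 1)
    (haa : a 0 * a 0 + a 1 * a 1 + a 2 * a 2 = 1)
    (hbb : b 0 * b 0 + b 1 * b 1 + b 2 * b 2 = 1)
    (hna : n 0 * a 0 + n 1 * a 1 + n 2 * a 2 = 0)
    (hnb : n 0 * b 0 + n 1 * b 1 + n 2 * b 2 = 0)
    (hab : a 0 * b 0 + a 1 * b 1 + a 2 * b 2 = 0) :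
    ∀ t t' : Fin 6, t ≠ t' → (∑ i, ∑ j, KE n a b t i j * KE n a b t' i j) = 0 := by
  intro t t' hne
  rcases f6 t with h | h | h | h | h | h <;> subst h <;>
    rcases f6 t' with h | h | h | h | h | h <;> subst h <;>
    simp only [KE_0, KE_1, KE_2, KE_3, KE_4, KE_5, Fin.sum_univ_three, kd00, kd01, kd02, kd10, kd11, kd12, kd20, kd21, kd22, eq_self_iff_true, if_true]
  · exact absurd rfl hne
  · linear_combination (n 0 * a 0 + n 1 * a 1 + n 2 * a 2) * hna + (-(n 0 * b 0 + n 1 * b 1 + n 2 * b 2)) * hnb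
  · linear_combination (2 * (n 0 * a 0 + n 1 * a 1 + n 2 * a 2)) * hnb
  · linear_combination (2 * (n 0 * n 0 + n 1 * n 1 + n 2 * n 2)) * hna
  · linear_combination (2 * (n 0 * n 0 + n 1 * n 1 + n 2 * n 2)) * hnb
  · linear_combination (-(n 0 * n 0 + n 1 * n 1 + n 2 * n 2)) * hnn
  · linear_combination (n 0 * a 0 + n 1 * a 1 + n 2 * a 2) * hna + (-(n 0 * b 0 + n 1 * b 1 + n 2 * b 2)) * hnb
  · exact absurd rfl hne
  · linear_combination (2 * ((a 0 * a 0 + a 1 * a 1 + a 2 * a 2) - (b 0 * b 0 + b 1 * b 1 + b 2 * b 2))) * hab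
  · linear_combination (2 * (a 0 * a 0 + a 1 * a 1 + a 2 * a 2)) * hna + (-(2 * (a 0 * b 0 + a 1 * b 1 + a 2 * b 2))) * hnb
  · linear_combination (2 * (a 0 * b 0 + a 1 * b 1 + a 2 * b 2)) * hna + (-(2 * (b 0 * b 0 + b 1 * b 1 + b 2 * b 2))) * hnb
  · linear_combination haa - hbb + (-(n 0 * a 0 + n 1 * a 1 + n 2 * a 2)) * hna + (n 0 * b 0 + n 1 * b 1 + n 2 * b 2) * hnb
  · linear_combination (2 * (n 0 * a 0 + n 1 * a 1 + n 2 * a 2)) * hnb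
  · linear_combination (2 * ((a 0 * a 0 + a 1 * a 1 + a 2 * a 2) - (b 0 * b 0 + b 1 * b 1 + b 2 * b 2))) * hab
  · exact absurd rfl hne
  · linear_combination (2 * (a 0 * b 0 + a 1 * b 1 + a 2 * b 2)) * hna + (2 * (a 0 * a 0 + a 1 * a 1 + a 2 * a 2)) * hnb
  · linear_combination (2 * (b 0 * b 0 + b 1 * b 1 + b 2 * b 2)) * hna + (2 * (a 0 * b 0 + a 1 * b 1 + a 2 * b 2)) * hnb
  · linear_combination 2 * hab + (-(2 * (n 0 * a 0 + n 1 * a 1 + n 2 * a 2))) * hnb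
  · linear_combination (2 * (n 0 * n 0 + n 1 * n 1 + n 2 * n 2)) * hna
  · linear_combination (2 * (a 0 * a 0 + a 1 * a 1 + a 2 * a 2)) * hna + (-(2 * (a 0 * b 0 + a 1 * b 1 + a 2 * b 2))) * hnb
  · linear_combination (2 * (a 0 * b 0 + a 1 * b 1 + a 2 * b 2)) * hna + (2 * (a 0 * a 0 + a 1 * a 1 + a 2 * a 2)) * hnb
  · exact absurd rfl hne
  · linear_combination (2 * (n 0 * n 0 + n 1 * n 1 + n 2 * n 2)) * hab + (2 * (n 0 * a 0 + n 1 * a 1 + n 2 * a 2)) * hnb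
  · linear_combination (2 - 2 * (n 0 * n 0 + n 1 * n 1 + n 2 * n 2)) * hna
  · linear_combination (2 * (n 0 * n 0 + n 1 * n 1 + n 2 * n 2)) * hnb
  · linear_combination (2 * (a 0 * b 0 + a 1 * b 1 + a 2 * b 2)) * hna + (-(2 * (b 0 * b 0 + b 1 * b 1 + b 2 * b 2))) * hnb
  · linear_combination (2 * (b 0 * b 0 + b 1 * b 1 + b 2 * b 2)) * hna + (2 * (a 0 * b 0 + a 1 * b 1 + a 2 * b 2)) * hnb
  · linear_combination (2 * (n 0 * n 0 + n 1 * n 1 + n 2 * n 2)) * hab + (2 * (n 0 * a 0 + n 1 * a 1 + n 2 * a 2)) * hnb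
  · exact absurd rfl hne
  · linear_combination (2 - 2 * (n 0 * n 0 + n 1 * n 1 + n 2 * n 2)) * hnb
  · linear_combination (-(n 0 * n 0 + n 1 * n 1 + n 2 * n 2)) * hnn
  · linear_combination haa - hbb + (-(n 0 * a 0 + n 1 * a 1 + n 2 * a 2)) * hna + (n 0 * b 0 + n 1 * b 1 + n 2 * b 2) * hnb
  · linear_combination 2 * hab + (-(2 * (n 0 * a 0 + n 1 * a 1 + n 2 * a 2))) * hnb
  · linear_combination (2 - 2 * (n 0 * n 0 + n 1 * n 1 + n 2 * n 2)) * hna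
  · linear_combination (2 - 2 * (n 0 * n 0 + n 1 * n 1 + n 2 * n 2)) * hnb
  · exact absurd rfl hne

lemma KEd (hnn : n 0 * n 0 + n 1 * n 1 + n 2 * n 2 = 1)
    (haa : a 0 * a 0 + a 1 * a 1 + a 2 * a 2 = 1)
    (hbb : b 0 * b 0 + b 1 * b 1 + b 2 * b 2 = 1)
    (hna : n 0 * a 0 + n 1 * a 1 + n 2 * a 2 = 0)
    (hnb : n 0 * b 0 + n 1 * b 1 + n 2 * b 2 = 0)
    (hab : a 0 * b 0 + a 1 * b 1 + a 2 * b 2 = 0) :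
    ∀ t : Fin 6, (∑ i, ∑ j, KE n a b t i j * KE n a b t i j) = vK6 t := by
  intro t
  rcases f6 t with h | h | h | h | h | h <;> subst h <;>
    simp only [KE_0, KE_1, KE_2, KE_3, KE_4, KE_5, Fin.sum_univ_three, kd00, kd01, kd02, kd10, kd11, kd12, kd20, kd21, kd22, eq_self_iff_true, if_true, vK6_0, vK6_1, vK6_2, vK6_3, vK6_4, vK6_5]
  · linear_combination ((n 0 * n 0 + n 1 * n 1 + n 2 * n 2) + 1) * hnn
  · linear_combination ((a 0 * a 0 + a 1 * a 1 + a 2 * a 2) + 1) * haa + ((b 0 * b 0 + b 1 * b 1 + b 2 * b 2) + 1) * hbb + (-(2 * (a 0 * b 0 + a 1 * b 1 + a 2 * b 2))) * hab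
  · linear_combination 2 * haa + (2 * (a 0 * a 0 + a 1 * a 1 + a 2 * a 2)) * hbb + (2 * (a 0 * b 0 + a 1 * b 1 + a 2 * b 2)) * hab
  · linear_combination 2 * hnn + (2 * (n 0 * n 0 + n 1 * n 1 + n 2 * n 2)) * haa + (2 * (n 0 * a 0 + n 1 * a 1 + n 2 * a 2)) * hna
  · linear_combination 2 * hnn + (2 * (n 0 * n 0 + n 1 * n 1 + n 2 * n 2)) * hbb + (2 * (n 0 * b 0 + n 1 * b 1 + n 2 * b 2)) * hnb
  · linear_combination ((n 0 * n 0 + n 1 * n 1 + n 2 * n 2) - 1) * hnn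

lemma MEo (hnn : n 0 * n 0 + n 1 * n 1 + n 2 * n 2 = 1)
    (haa : a 0 * a 0 + a 1 * a 1 + a 2 * a 2 = 1)
    (hbb : b 0 * b 0 + b 1 * b 1 + b 2 * b 2 = 1)
    (hna : n 0 * a 0 + n 1 * a 1 + n 2 * a 2 = 0)
    (hnb : n 0 * b 0 + n 1 * b 1 + n 2 * b 2 = 0)
    (hab : a 0 * b 0 + a 1 * b 1 + a 2 * b 2 = 0) :
    ∀ t t' : Fin 3, t ≠ t' → (∑ i, ∑ j, ME n a b t i j * ME n a b t' i j) = 0 := by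
  intro t t' hne
  rcases f3 t with h | h | h <;> subst h <;>
    rcases f3 t' with h | h | h <;> subst h <;>
    simp only [ME_0, ME_1, ME_2, Fin.sum_univ_three, kd00, kd01, kd02, kd10, kd11, kd12, kd20, kd21, kd22, eq_self_iff_true, if_true]
  · exact absurd rfl hne
  · linear_combination (n 0 * a 0 + n 1 * a 1 + n 2 * a 2) * hnn
  · linear_combination (n 0 * b 0 + n 1 * b 1 + n 2 * b 2) * hnn
  · linear_combination (n 0 * a 0 + n 1 * a 1 + n 2 * a 2) * hnn
  · exact absurd rfl hne
  · linear_combination ((1/2) * (n 0 * n 0 + n 1 * n 1 + n 2 * n 2)) * hab + ((1/2) * (n 0 * a 0 + n 1 * a 1 + n 2 * a 2)) * hnb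
  · linear_combination (n 0 * b 0 + n 1 * b 1 + n 2 * b 2) * hnn
  · linear_combination ((1/2) * (n 0 * n 0 + n 1 * n 1 + n 2 * n 2)) * hab + ((1/2) * (n 0 * a 0 + n 1 * a 1 + n 2 * a 2)) * hnb
  · exact absurd rfl hne

lemma MEd (hnn : n 0 * n 0 + n 1 * n 1 + n 2 * n 2 = 1)
    (haa : a 0 * a 0 + a 1 * a 1 + a 2 * a 2 = 1)
    (hbb : b 0 * b 0 + b 1 * b 1 + b 2 * b 2 = 1)
    (hna : n 0 * a 0 + n 1 * a 1 + n 2 * a 2 = 0)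
    (hnb : n 0 * b 0 + n 1 * b 1 + n 2 * b 2 = 0)
    (hab : a 0 * b 0 + a 1 * b 1 + a 2 * b 2 = 0) :
    ∀ t : Fin 3, (∑ i, ∑ j, ME n a b t i j * ME n a b t i j) = vM3 t := by
  intro t
  rcases f3 t with h | h | h <;> subst h <;>
    simp only [ME_0, ME_1, ME_2, Fin.sum_univ_three, kd00, kd01, kd02, kd10, kd11, kd12, kd20, kd21, kd22, eq_self_iff_true, if_true, vM3_0, vM3_1, vM3_2]
  · linear_combination ((n 0 * n 0 + n 1 * n 1 + n 2 * n 2) - 1) * hnn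
  · linear_combination ((1/2) * (n 0 * n 0 + n 1 * n 1 + n 2 * n 2)) * haa + (1/2) * hnn + ((1/2) * (n 0 * a 0 + n 1 * a 1 + n 2 * a 2)) * hna
  · linear_combination ((1/2) * (n 0 * n 0 + n 1 * n 1 + n 2 * n 2)) * hbb + (1/2) * hnn + ((1/2) * (n 0 * b 0 + n 1 * b 1 + n 2 * b 2)) * hnb

lemma qEo (hnn : n 0 * n 0 + n 1 * n 1 + n 2 * n 2 = 1)
    (haa : a 0 * a 0 + a 1 * a 1 + a 2 * a 2 = 1)
    (hbb : b 0 * b 0 + b 1 * b 1 + b 2 * b 2 = 1)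
    (hna : n 0 * a 0 + n 1 * a 1 + n 2 * a 2 = 0)
    (hnb : n 0 * b 0 + n 1 * b 1 + n 2 * b 2 = 0)
    (hab : a 0 * b 0 + a 1 * b 1 + a 2 * b 2 = 0) :
    ∀ t t' : Fin 6, t ≠ t' → (∑ i, qE n a b t i * qE n a b t' i) = 0 := by
  intro t t' hne
  rcases f6 t with h | h | h | h | h | h <;> subst h <;>
    rcases f6 t' with h | h | h | h | h | h <;> subst h <;>
    simp only [qE_0, qE_1, qE_2, qE_3, qE_4, qE_5, Fin.sum_univ_three, Pi.zero_apply, zero_mul, mul_zero, add_zero, zero_add]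
  · exact absurd rfl hne
  · linear_combination hab
  · linear_combination (-2) * hna
  · linear_combination hab
  · exact absurd rfl hne
  · linear_combination (-2) * hnb
  · linear_combination (-2) * hna
  · linear_combination (-2) * hnb
  · exact absurd rfl hne

lemma qEd (hnn : n 0 * n 0 + n 1 * n 1 + n 2 * n 2 = 1)
    (haa : a 0 * a 0 + a 1 * a 1 + a 2 * a 2 = 1)
    (hbb : b 0 * b 0 + b 1 * b 1 + b 2 * b 2 = 1)
    (hna : n 0 * a 0 + n 1 * a 1 + n 2 * a 2 = 0)
    (hnb : n 0 * b 0 + n 1 * b 1 + n 2 * b 2 = 0)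
    (hab : a 0 * b 0 + a 1 * b 1 + a 2 * b 2 = 0) :
    ∀ t : Fin 6, (∑ i, qE n a b t i * qE n a b t i) = vq6 t := by
  intro t
  rcases f6 t with h | h | h | h | h | h <;> subst h <;>
    simp only [qE_0, qE_1, qE_2, qE_3, qE_4, qE_5, Fin.sum_univ_three, Pi.zero_apply, zero_mul, mul_zero, add_zero, zero_add, vq6_0, vq6_1, vq6_2, vq6_3, vq6_4, vq6_5]
  · linear_combination haa
  · linear_combination hbb
  · linear_combination (4) * hnn

end values
section master

abbrev it : Type := (Fin 6 ⊕ (Fin 2 × Fin 6)) ⊕ (Fin 3 ⊕ (Bool × Fin 6))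

noncomputable def Vit (n a b : Fin 3 → ℝ) : it → Wt
  | .inl (.inl t) => VG n a b t
  | .inl (.inr ct) => VF n a b ct.1 ct.2
  | .inr (.inl r) => VP n a b r
  | .inr (.inr st) => VE n a b (if st.1 then 1 else -1) st.2

noncomputable def μit : it → ℝ
  | .inl _ => 0
  | .inr (.inl _) => 0
  | .inr (.inr st) => (if st.1 then 1 else -1) * sE st.2

variable (n a b : Fin 3 → ℝ)

lemma sE_pos : ∀ t, 0 < sE t := by
  intro t
  have h6 : 0 < Real.sqrt 6 := Real.sqrt_pos.mpr (by norm_num)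
  have h3 : 0 < Real.sqrt 3 := Real.sqrt_pos.mpr (by norm_num)
  rcases f6 t with h | h | h | h | h | h <;> subst h <;>
    simp only [sE_0, sE_1, sE_2, sE_3, sE_4, sE_5] <;> norm_num [h6, h3]

lemma EEdiff (hnn : n 0 * n 0 + n 1 * n 1 + n 2 * n 2 = 1)
    (haa : a 0 * a 0 + a 1 * a 1 + a 2 * a 2 = 1)
    (hbb : b 0 * b 0 + b 1 * b 1 + b 2 * b 2 = 1)
    (hna : n 0 * a 0 + n 1 * a 1 + n 2 * a 2 = 0)
    (hnb : n 0 * b 0 + n 1 * b 1 + n 2 * b 2 = 0)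
    (hab : a 0 * b 0 + a 1 * b 1 + a 2 * b 2 = 0)
    (ε ε' : ℝ) (t t' : Fin 6) (h : t ≠ t') :
    ipt (VE n a b ε t) (VE n a b ε' t') = 0 := by
  simp only [ipt, VE, Pi.zero_apply, zero_mul, mul_zero, Finset.sum_const_zero, zero_add,
    add_zero]
  rw [ip3f2, ip1f2, KEo n a b hnn haa hbb hna hnb hab t t' h,
    qEo n a b hnn haa hbb hna hnb hab t t' h]
  ring

lemma EEopp (hnn : n 0 * n 0 + n 1 * n 1 + n 2 * n 2 = 1)
    (haa : a 0 * a 0 + a 1 * a 1 + a 2 * a 2 = 1)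
    (hbb : b 0 * b 0 + b 1 * b 1 + b 2 * b 2 = 1)
    (hna : n 0 * a 0 + n 1 * a 1 + n 2 * a 2 = 0)
    (hnb : n 0 * b 0 + n 1 * b 1 + n 2 * b 2 = 0)
    (hab : a 0 * b 0 + a 1 * b 1 + a 2 * b 2 = 0)
    (ε ε' : ℝ) (hee : ε * ε' = -1) (t : Fin 6) :
    ipt (VE n a b ε t) (VE n a b ε' t) = 0 := by
  have h6 : Real.sqrt 6 * Real.sqrt 6 = 6 := Real.mul_self_sqrt (by norm_num)
  have h3 : Real.sqrt 3 * Real.sqrt 3 = 3 := Real.mul_self_sqrt (by norm_num)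
  have hdnn : (∑ k, n k * n k) = 1 := by simp only [Fin.sum_univ_three]; exact hnn
  simp only [ipt, VE, Pi.zero_apply, zero_mul, mul_zero, Finset.sum_const_zero, zero_add,
    add_zero]
  rw [ip3f2, ip1f2, KEd n a b hnn haa hbb hna hnb hab t,
    qEd n a b hnn haa hbb hna hnb hab t, hdnn]
  rcases f6 t with h | h | h | h | h | h <;> subst h <;>
    simp only [cE_0, cE_1, cE_2, cE_3, cE_4, cE_5, vK6_0, vK6_1, vK6_2, vK6_3, vK6_4, vK6_5,
      vq6_0, vq6_1, vq6_2, vq6_3, vq6_4, vq6_5]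
  · linear_combination hee
  · linear_combination (2:ℝ) * hee
  · linear_combination (2:ℝ) * hee
  · linear_combination (Real.sqrt 6 * Real.sqrt 6 / 3) * hee + (-(1/3 : ℝ)) * h6
  · linear_combination (Real.sqrt 6 * Real.sqrt 6 / 3) * hee + (-(1/3 : ℝ)) * h6
  · linear_combination (2 * (Real.sqrt 3 * Real.sqrt 3) / 3) * hee + (-(2/3 : ℝ)) * h3

lemma EEdiag (hnn : n 0 * n 0 + n 1 * n 1 + n 2 * n 2 = 1)
    (haa : a 0 * a 0 + a 1 * a 1 + a 2 * a 2 = 1)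
    (hbb : b 0 * b 0 + b 1 * b 1 + b 2 * b 2 = 1)
    (hna : n 0 * a 0 + n 1 * a 1 + n 2 * a 2 = 0)
    (hnb : n 0 * b 0 + n 1 * b 1 + n 2 * b 2 = 0)
    (hab : a 0 * b 0 + a 1 * b 1 + a 2 * b 2 = 0)
    (ε : ℝ) (hε : ε * ε = 1) (t : Fin 6) :
    ipt (VE n a b ε t) (VE n a b ε t) = vE6 t := by
  have h6 : Real.sqrt 6 * Real.sqrt 6 = 6 := Real.mul_self_sqrt (by norm_num)
  have h3 : Real.sqrt 3 * Real.sqrt 3 = 3 := Real.mul_self_sqrt (by norm_num)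
  have hdnn : (∑ k, n k * n k) = 1 := by simp only [Fin.sum_univ_three]; exact hnn
  simp only [ipt, VE, Pi.zero_apply, zero_mul, mul_zero, Finset.sum_const_zero, zero_add,
    add_zero]
  rw [ip3f2, ip1f2, KEd n a b hnn haa hbb hna hnb hab t,
    qEd n a b hnn haa hbb hna hnb hab t, hdnn]
  rcases f6 t with h | h | h | h | h | h <;> subst h <;>
    simp only [cE_0, cE_1, cE_2, cE_3, cE_4, cE_5, vK6_0, vK6_1, vK6_2, vK6_3, vK6_4, vK6_5,
      vq6_0, vq6_1, vq6_2, vq6_3, vq6_4, vq6_5, vE6_0, vE6_1, vE6_2, vE6_3, vE6_4, vE6_5]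
  · linear_combination hε
  · linear_combination (2:ℝ) * hε
  · linear_combination (2:ℝ) * hε
  · linear_combination (Real.sqrt 6 * Real.sqrt 6 / 3) * hε + (1/3 : ℝ) * h6
  · linear_combination (Real.sqrt 6 * Real.sqrt 6 / 3) * hε + (1/3 : ℝ) * h6
  · linear_combination (2 * (Real.sqrt 3 * Real.sqrt 3) / 3) * hε + (2/3 : ℝ) * h3

end master
section master2
variable (n a b : Fin 3 → ℝ)
variable (hnn : n 0 * n 0 + n 1 * n 1 + n 2 * n 2 = 1)
    (haa : a 0 * a 0 + a 1 * a 1 + a 2 * a 2 = 1)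
    (hbb : b 0 * b 0 + b 1 * b 1 + b 2 * b 2 = 1)
    (hna : n 0 * a 0 + n 1 * a 1 + n 2 * a 2 = 0)
    (hnb : n 0 * b 0 + n 1 * b 1 + n 2 * b 2 = 0)
    (hab : a 0 * b 0 + a 1 * b 1 + a 2 * b 2 = 0)

include hnn haa hbb hna hnb hab

lemma heig_master : ∀ m, bopt n (Vit n a b m) = μit m • Vit n a b m := by
  rintro ((t | ⟨c, t⟩) | (r | ⟨s, t⟩))
  · exact eigG n a b t
  · show bopt n (VF n a b c t) = (0 : ℝ) • VF n a b c t
    rcases f2 c with h | h <;> subst h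
    · exact eigF n a hna (SB n a b t)
    · exact eigF n b hnb (SB n a b t)
  · show bopt n (VP n a b r) = (0 : ℝ) • VP n a b r
    rcases f3 r with h | h | h <;> subst h
    · exact eigP0 n a b hnn
    · exact eigPu n a hnn hna
    · exact eigPu n b hnn hnb
  · show bopt n (VE n a b _ t) = ((if s then 1 else -1) * sE t) • VE n a b _ t
    have hε : (if s then (1:ℝ) else -1) * (if s then (1:ℝ) else -1) = 1 := by
      rcases s <;> norm_num
    rcases f6 t with h | h | h | h | h | h <;> subst h
    · exact eigE0 n a b _ hnn hε
    · exact eigE1 n a b _ haa hbb hnn hna hnb hε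
    · exact eigE2 n a b _ hnn hna hnb hab hε
    · exact eigE3 n a b _ hnn hna hε
    · exact eigE4 n a b _ hnn hnb hε
    · exact eigE5 n a b _ hnn hε

omit hnn haa hbb hna hnb hab in
lemma hmem_master : ∀ m, Vit n a b m ∈ Vtsub := by
  rintro ((t | ⟨c, t⟩) | (r | ⟨s, t⟩))
  · exact memG n a b t
  · exact memF n a b c t
  · exact memP n a b r
  · exact memE n a b _ t

lemma horth_master : ∀ m m', m ≠ m' → ipt (Vit n a b m) (Vit n a b m') = 0 := by
  have hdnn : (∑ k, n k * n k) = 1 := by simp only [Fin.sum_univ_three]; exact hnn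
  have hdaa : (∑ k, a k * a k) = 1 := by simp only [Fin.sum_univ_three]; exact haa
  have hdbb : (∑ k, b k * b k) = 1 := by simp only [Fin.sum_univ_three]; exact hbb
  have hdna : (∑ k, n k * a k) = 0 := by simp only [Fin.sum_univ_three]; exact hna
  have hdnb : (∑ k, n k * b k) = 0 := by simp only [Fin.sum_univ_three]; exact hnb
  have hdab : (∑ k, a k * b k) = 0 := by simp only [Fin.sum_univ_three]; exact hab
  have hdan : (∑ k, a k * n k) = 0 := by
    simp only [Fin.sum_univ_three]; linear_combination hna
  have hdbn : (∑ k, b k * n k) = 0 := by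
    simp only [Fin.sum_univ_three]; linear_combination hnb
  have hdba : (∑ k, b k * a k) = 0 := by
    simp only [Fin.sum_univ_three]; linear_combination hab
  rintro ((t | ⟨c, t⟩) | (r | ⟨s, t⟩)) ((t' | ⟨c', t'⟩) | (r' | ⟨s', t'⟩)) hne
  -- G G
  · have ht : t ≠ t' := by rintro rfl; exact hne rfl
    simp only [Vit, ipt, VG, Pi.zero_apply, mul_zero, zero_mul, Finset.sum_const_zero,
      add_zero, zero_add]
    exact SBo n a b hnn haa hbb hna hnb hab t t' ht
  -- G F
  · simp only [Vit, ipt, VG, VF, Pi.zero_apply, mul_zero, zero_mul, Finset.sum_const_zero,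
      add_zero, zero_add]
  -- G P
  · simp only [Vit, ipt, VG, VP, Pi.zero_apply, mul_zero, zero_mul, Finset.sum_const_zero,
      add_zero, zero_add]
  -- G E
  · simp only [Vit, ipt, VG, VE, Pi.zero_apply, mul_zero, zero_mul, Finset.sum_const_zero,
      add_zero, zero_add]
  -- F G
  · simp only [Vit, ipt, VG, VF, Pi.zero_apply, mul_zero, zero_mul, Finset.sum_const_zero,
      add_zero, zero_add]
  -- F F
  · simp only [Vit, ipt, VF, Pi.zero_apply, mul_zero, zero_mul, Finset.sum_const_zero,
      add_zero, zero_add]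
    rw [ip3f]
    rcases f2 c with h | h <;> subst h <;> rcases f2 c' with h | h <;> subst h <;>
      simp only [uF_0, uF_1]
    · have ht : t ≠ t' := by rintro rfl; exact hne rfl
      rw [SBo n a b hnn haa hbb hna hnb hab t t' ht, mul_zero]
    · rw [hdab, zero_mul]
    · rw [hdba, zero_mul]
    · have ht : t ≠ t' := by rintro rfl; exact hne rfl
      rw [SBo n a b hnn haa hbb hna hnb hab t t' ht, mul_zero]
  -- F P
  · simp only [Vit, ipt, VF, VP, Pi.zero_apply, mul_zero, zero_mul, Finset.sum_const_zero,
      add_zero, zero_add]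
    rw [ip3f]
    rcases f2 c with h | h <;> subst h <;> simp only [uF_0, uF_1]
    · rw [hdan, zero_mul]
    · rw [hdbn, zero_mul]
  -- F E
  · simp only [Vit, ipt, VF, VE, Pi.zero_apply, mul_zero, zero_mul, Finset.sum_const_zero,
      add_zero, zero_add]
    rw [ip3fr]
    rcases f2 c with h | h <;> subst h <;> simp only [uF_0, uF_1]
    · rw [hdan, zero_mul, mul_zero]
    · rw [hdbn, zero_mul, mul_zero]
  -- P G
  · simp only [Vit, ipt, VG, VP, Pi.zero_apply, mul_zero, zero_mul, Finset.sum_const_zero,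
      add_zero, zero_add]
  -- P F
  · simp only [Vit, ipt, VF, VP, Pi.zero_apply, mul_zero, zero_mul, Finset.sum_const_zero,
      add_zero, zero_add]
    rw [ip3f]
    rcases f2 c' with h | h <;> subst h <;> simp only [uF_0, uF_1]
    · rw [hdna, zero_mul]
    · rw [hdnb, zero_mul]
  -- P P
  · have hr : r ≠ r' := by rintro rfl; exact hne rfl
    simp only [Vit, ipt, VP, Pi.zero_apply, mul_zero, zero_mul, Finset.sum_const_zero,
      add_zero, zero_add]
    rw [ip3f, hdnn, one_mul, MEo n a b hnn haa hbb hna hnb hab r r' hr, zero_add]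
    rcases f3 r with h | h | h <;> subst h <;> rcases f3 r' with h | h | h <;> subst h <;>
      simp only [pP_0, pP_1, pP_2]
    · exact absurd rfl hr
    · exact hdna
    · exact hdnb
    · exact hdan
    · exact absurd rfl hr
    · exact hdab
    · exact hdbn
    · exact hdba
    · exact absurd rfl hr
  -- P E
  · exact orth_ne n _ _ 0 ((if s' then 1 else -1) * sE t') (hmem_master n a b _)
      (hmem_master n a b _) (heig_master n a b hnn haa hbb hna hnb hab _)
      (heig_master n a b hnn haa hbb hna hnb hab _)
      (by have hp := sE_pos t'; rcases s' <;> intro h <;> simp at h <;> nlinarith)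
  -- E G
  · simp only [Vit, ipt, VG, VE, Pi.zero_apply, mul_zero, zero_mul, Finset.sum_const_zero,
      add_zero, zero_add]
  -- E F
  · simp only [Vit, ipt, VF, VE, Pi.zero_apply, mul_zero, zero_mul, Finset.sum_const_zero,
      add_zero, zero_add]
    rw [ip3fl]
    rcases f2 c' with h | h <;> subst h <;> simp only [uF_0, uF_1]
    · rw [hdna, zero_mul, mul_zero]
    · rw [hdnb, zero_mul, mul_zero]
  -- E P
  · exact orth_ne n _ _ ((if s then 1 else -1) * sE t) 0 (hmem_master n a b _)
      (hmem_master n a b _) (heig_master n a b hnn haa hbb hna hnb hab _)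
      (heig_master n a b hnn haa hbb hna hnb hab _)
      (by have hp := sE_pos t; rcases s <;> intro h <;> simp at h <;> nlinarith)
  -- E E
  · show ipt (VE n a b _ t) (VE n a b _ t') = 0
    by_cases htt : t = t'
    · subst htt
      have hss : s ≠ s' := by rintro rfl; exact hne rfl
      refine EEopp n a b hnn haa hbb hna hnb hab _ _ ?_ t
      rcases s <;> rcases s' <;> first | exact absurd rfl hss | simp | norm_num
    · exact EEdiff n a b hnn haa hbb hna hnb hab _ _ t t' htt

lemma hnz_master : ∀ m, ipt (Vit n a b m) (Vit n a b m) ≠ 0 := by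
  have hdnn : (∑ k, n k * n k) = 1 := by simp only [Fin.sum_univ_three]; exact hnn
  have hdaa : (∑ k, a k * a k) = 1 := by simp only [Fin.sum_univ_three]; exact haa
  have hdbb : (∑ k, b k * b k) = 1 := by simp only [Fin.sum_univ_three]; exact hbb
  rintro ((t | ⟨c, t⟩) | (r | ⟨s, t⟩))
  · simp only [Vit, ipt, VG, Pi.zero_apply, mul_zero, zero_mul, Finset.sum_const_zero,
      add_zero, zero_add]
    rw [SBd n a b hnn haa hbb hna hnb hab t]
    rcases f6 t with h | h | h | h | h | h <;> subst h <;> simp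
  · simp only [Vit, ipt, VF, Pi.zero_apply, mul_zero, zero_mul, Finset.sum_const_zero,
      add_zero, zero_add]
    rw [ip3f]
    rcases f2 c with h | h <;> subst h <;> simp only [uF_0, uF_1]
    · rw [hdaa, one_mul, SBd n a b hnn haa hbb hna hnb hab t]
      rcases f6 t with h | h | h | h | h | h <;> subst h <;> simp
    · rw [hdbb, one_mul, SBd n a b hnn haa hbb hna hnb hab t]
      rcases f6 t with h | h | h | h | h | h <;> subst h <;> simp
  · simp only [Vit, ipt, VP, Pi.zero_apply, mul_zero, zero_mul, Finset.sum_const_zero,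
      add_zero, zero_add]
    rw [ip3f, hdnn, one_mul, MEd n a b hnn haa hbb hna hnb hab r]
    rcases f3 r with h | h | h <;> subst h <;> simp only [pP_0, pP_1, pP_2, vM3_0, vM3_1, vM3_2]
    · rw [hdnn]; norm_num
    · rw [hdaa]; norm_num
    · rw [hdbb]; norm_num
  · show ipt (VE n a b _ t) (VE n a b _ t) ≠ 0
    rw [EEdiag n a b hnn haa hbb hna hnb hab _ (by rcases s <;> norm_num) t]
    rcases f6 t with h | h | h | h | h | h <;> subst h <;> simp
end master2
section dim

def pIdx : Fin 3 → Fin 3 → Fin 6 := ![![0,1,2],![1,3,4],![2,4,5]]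
def iIdx : Fin 6 → Fin 3 := ![0,0,0,1,1,2]
def jIdx : Fin 6 → Fin 3 := ![0,1,2,1,2,2]

abbrev Ct : Type := (Fin 6 → ℝ) × (Fin 6 → ℝ) × (Fin 3 → Fin 6 → ℝ) × (Fin 3 → ℝ)

def toC : Vtsub →ₗ[ℝ] Ct where
  toFun v := (fun t => (v : Wt).1 (iIdx t) (jIdx t), fun t => (v : Wt).2.1 (iIdx t) (jIdx t),
    fun k t => (v : Wt).2.2.1 k (iIdx t) (jIdx t), fun i => (v : Wt).2.2.2 i)
  map_add' u v := rfl
  map_smul' c v := rfl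

lemma pIdx_symm : ∀ i j, pIdx i j = pIdx j i := by decide
lemma pIdx_sect : ∀ t, pIdx (iIdx t) (jIdx t) = t := by decide

def ofC : Ct →ₗ[ℝ] Vtsub where
  toFun c := ⟨(fun i j => c.1 (pIdx i j), fun i j => c.2.1 (pIdx i j),
      fun k i j => c.2.2.1 k (pIdx i j), c.2.2.2),
    ⟨fun i j => by show c.1 (pIdx i j) = c.1 (pIdx j i); rw [pIdx_symm i j],
     fun i j => by show c.2.1 (pIdx i j) = c.2.1 (pIdx j i); rw [pIdx_symm i j],
     fun k i j => by show c.2.2.1 k (pIdx i j) = c.2.2.1 k (pIdx j i); rw [pIdx_symm i j]⟩⟩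
  map_add' u v := rfl
  map_smul' c v := rfl

noncomputable def eqC : Vtsub ≃ₗ[ℝ] Ct := by
  refine LinearEquiv.ofLinear toC ofC ?_ ?_
  · apply LinearMap.ext
    intro c
    refine Prod.ext ?_ (Prod.ext ?_ (Prod.ext ?_ ?_))
    · funext t; show c.1 (pIdx (iIdx t) (jIdx t)) = c.1 t; rw [pIdx_sect t]
    · funext t; show c.2.1 (pIdx (iIdx t) (jIdx t)) = c.2.1 t; rw [pIdx_sect t]
    · funext k t; show c.2.2.1 k (pIdx (iIdx t) (jIdx t)) = c.2.2.1 k t; rw [pIdx_sect t]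
    · rfl
  · apply LinearMap.ext
    intro v
    obtain ⟨⟨g, K, f, p⟩, hg, hK, hf⟩ := v
    apply Subtype.ext
    refine Prod.ext ?_ (Prod.ext ?_ (Prod.ext ?_ ?_))
    · funext i j
      show g (iIdx (pIdx i j)) (jIdx (pIdx i j)) = g i j
      rcases f3 i with h | h | h <;> subst h <;> rcases f3 j with h | h | h <;> subst h <;>
        first | rfl | exact hg 0 1 | exact hg 0 2 | exact hg 1 2
    · funext i j
      show K (iIdx (pIdx i j)) (jIdx (pIdx i j)) = K i j
      rcases f3 i with h | h | h <;> subst h <;> rcases f3 j with h | h | h <;> subst h <;>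
        first | rfl | exact hK 0 1 | exact hK 0 2 | exact hK 1 2
    · funext k i j
      show f k (iIdx (pIdx i j)) (jIdx (pIdx i j)) = f k i j
      rcases f3 i with h | h | h <;> subst h <;> rcases f3 j with h | h | h <;> subst h <;>
        first | rfl | exact hf k 0 1 | exact hf k 0 2 | exact hf k 1 2
    · rfl

lemma finrank_Vtsub : Module.finrank ℝ Vtsub = 33 := by
  have h1 : Module.finrank ℝ Ct = 33 := by
    rw [show (33:ℕ) = 6 + (6 + (18 + 3)) from rfl]
    rw [Module.finrank_prod, Module.finrank_prod, Module.finrank_prod]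
    congr 1
    · simp
    congr 1
    · simp
    congr 1
    · rw [Module.finrank_pi_fintype]
      simp
    · simp
  rw [eqC.finrank_eq, h1]

instance : FiniteDimensional ℝ Vtsub := Module.Finite.equiv eqC.symm

end dim


lemma exists_frame (n : Fin 3 → ℝ) (hn : ∑ i, n i ^ 2 = 1) :
    ∃ a b : Fin 3 → ℝ, (∑ i, a i * a i = 1) ∧ (∑ i, b i * b i = 1) ∧ (∑ i, n i * a i = 0)
      ∧ (∑ i, n i * b i = 0) ∧ (∑ i, a i * b i = 0) := by
  classical
  set E := EuclideanSpace ℝ (Fin 3)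
  let v : E := WithLp.toLp 2 n
  have hcard : Module.finrank ℝ E = Fintype.card (Fin 3) := by
    simp [E, finrank_euclideanSpace]
  have horth : Orthonormal ℝ (Set.restrict {(2 : Fin 3)} (fun _ : Fin 3 => v)) := by
    rw [orthonormal_iff_ite]
    rintro ⟨i, hi⟩ ⟨j, hj⟩
    simp only [Set.mem_singleton_iff] at hi hj
    subst hi; subst hj
    simp only [Set.restrict_apply, if_pos rfl]
    · show (inner ℝ v v : ℝ) = 1
      rw [PiLp.inner_apply]
      simpa [v, RCLike.inner_apply, sq] using hn
  obtain ⟨b, hb⟩ := horth.exists_orthonormalBasis_extension_of_card_eq hcard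
  have hb2 : b 2 = v := hb 2 rfl
  have hip : ∀ i j, (inner ℝ (b i) (b j) : ℝ) = if i = j then 1 else 0 :=
    orthonormal_iff_ite.mp b.orthonormal
  have key : ∀ i j, (∑ k, b i k * b j k) = if i = j then 1 else 0 := by
    intro i j
    have := hip i j
    rw [PiLp.inner_apply] at this; simpa [mul_comm] using this
  refine ⟨b 0, b 1, ?_, ?_, ?_, ?_, ?_⟩
  · simpa using key 0 0
  · simpa using key 1 1
  · have := key 2 0; rw [hb2] at this; simpa [v, mul_comm] using this
  · have := key 2 1; rw [hb2] at this; simpa [v, mul_comm] using this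
  · simpa using key 0 1

section count

lemma count_pos : (Finset.univ.filter fun m : it => 0 < μit m).card = 6 := by
  have himg : (Finset.univ.filter fun m : it => 0 < μit m)
      = Finset.univ.image (fun t : Fin 6 => (Sum.inr (Sum.inr (true, t)) : it)) := by
    ext m
    simp only [Finset.mem_filter, Finset.mem_univ, true_and, Finset.mem_image]
    constructor
    · intro hm
      rcases m with ((t | ct) | (r | ⟨s, t⟩))
      · simp [μit] at hm
      · simp [μit] at hm
      · simp [μit] at hm
      · rcases s
        · exfalso; have := sE_pos t; simp only [μit, if_false, Bool.false_eq_true] at hm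
          nlinarith
        · exact ⟨t, rfl⟩
    · rintro ⟨t, rfl⟩
      simpa [μit] using sE_pos t
  rw [himg, Finset.card_image_of_injective _ (fun x y h => by simpa using h)]
  simp

lemma count_neg : (Finset.univ.filter fun m : it => μit m < 0).card = 6 := by
  have himg : (Finset.univ.filter fun m : it => μit m < 0)
      = Finset.univ.image (fun t : Fin 6 => (Sum.inr (Sum.inr (false, t)) : it)) := by
    ext m
    simp only [Finset.mem_filter, Finset.mem_univ, true_and, Finset.mem_image]
    constructor
    · intro hm
      rcases m with ((t | ct) | (r | ⟨s, t⟩))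
      · simp [μit] at hm
      · simp [μit] at hm
      · simp [μit] at hm
      · rcases s
        · exact ⟨t, rfl⟩
        · exfalso; have := sE_pos t; simp only [μit, if_true] at hm
          nlinarith
    · rintro ⟨t, rfl⟩
      have := sE_pos t
      simp only [μit, if_false, Bool.false_eq_true]
      nlinarith
  rw [himg, Finset.card_image_of_injective _ (fun x y h => by simpa using h)]
  simp

lemma card_it : Fintype.card it = 33 := by
  simp [it]

lemma count_zero : (Finset.univ.filter fun m : it => μit m = 0).card = 21 := by
  have hdisj : Disjoint (Finset.univ.filter fun m : it => 0 < μit m)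
      (Finset.univ.filter fun m : it => μit m < 0) := by
    rw [Finset.disjoint_left]
    intro m h1 h2
    simp only [Finset.mem_filter, Finset.mem_univ, true_and] at h1 h2
    linarith
  have hz : (Finset.univ.filter fun m : it => μit m = 0)
      = ((Finset.univ.filter fun m : it => 0 < μit m)
          ∪ (Finset.univ.filter fun m : it => μit m < 0))ᶜ := by
    ext m
    simp only [Finset.mem_filter, Finset.mem_univ, true_and, Finset.mem_compl,
      Finset.mem_union, not_or, not_lt]
    constructor
    · intro h; exact ⟨h.le, h.ge⟩
    · rintro ⟨h1, h2⟩; exact le_antisymm h1 h2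
  rw [hz, Finset.card_compl, Finset.card_union_of_disjoint hdisj, count_pos, count_neg, card_it]

end count
end BC

open BC


/-- for every unit vector `n`, the symmetric boundary operator `Ã_n` on
the 33-dimensional space `Ṽ`, diagonalized in a basis of eigenvectors, has exactly six
positive, twenty-one zero, and six negative eigenvalues, counted with multiplicity. -/
theorem bopt_eigenvalue_counts
    (n : Fin 3 → ℝ) (hn : ∑ i, n i ^ 2 = 1) :
    ∃ (b : Module.Basis (Fin 33) ℝ Vtsub) (μ : Fin 33 → ℝ),
      (∀ i, bopt n (b i : Wt) = μ i • (b i : Wt)) ∧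
      (Finset.univ.filter fun i => 0 < μ i).card = 6 ∧
      (Finset.univ.filter fun i => μ i = 0).card = 21 ∧
      (Finset.univ.filter fun i => μ i < 0).card = 6 := by
  classical
  obtain ⟨a, b, haa', hbb', hna', hnb', hab'⟩ := exists_frame n hn
  have hnn : n 0 * n 0 + n 1 * n 1 + n 2 * n 2 = 1 := by
    simp only [Fin.sum_univ_three] at hn; linear_combination hn
  have haa : a 0 * a 0 + a 1 * a 1 + a 2 * a 2 = 1 := by
    simp only [Fin.sum_univ_three] at haa'; linear_combination haa'
  have hbb : b 0 * b 0 + b 1 * b 1 + b 2 * b 2 = 1 := by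
    simp only [Fin.sum_univ_three] at hbb'; linear_combination hbb'
  have hna : n 0 * a 0 + n 1 * a 1 + n 2 * a 2 = 0 := by
    simp only [Fin.sum_univ_three] at hna'; linear_combination hna'
  have hnb : n 0 * b 0 + n 1 * b 1 + n 2 * b 2 = 0 := by
    simp only [Fin.sum_univ_three] at hnb'; linear_combination hnb'
  have hab : a 0 * b 0 + a 1 * b 1 + a 2 * b 2 = 0 := by
    simp only [Fin.sum_univ_three] at hab'; linear_combination hab'
  have hmem := hmem_master n a b
  set VS : it → Vtsub := fun m => ⟨Vit n a b m, hmem m⟩ with hVS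
  have hli : LinearIndependent ℝ VS := by
    apply LinearIndependent.of_comp (Vtsub.subtype)
    have hcomp : (⇑Vtsub.subtype ∘ VS) = Vit n a b := rfl
    rw [hcomp]
    exact li_of_orth (Vit n a b) (horth_master n a b hnn haa hbb hna hnb hab)
      (hnz_master n a b hnn haa hbb hna hnb hab)
  have hcard : Fintype.card it = Module.finrank ℝ Vtsub := by rw [finrank_Vtsub, card_it]
  let b0 : Module.Basis it ℝ Vtsub := basisOfLinearIndependentOfCardEqFinrank hli hcard
  let e : it ≃ Fin 33 := Fintype.equivFinOfCardEq card_it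
  have htrans : ∀ p : ℝ → Prop,
      (Finset.univ.filter fun i : Fin 33 => p (μit (e.symm i))).card
        = (Finset.univ.filter fun m : it => p (μit m)).card := by
    intro p
    apply Finset.card_bij (fun i _ => e.symm i)
    · intro i hi
      simp only [Finset.mem_filter, Finset.mem_univ, true_and] at hi ⊢
      exact hi
    · intro i _ j _ h
      exact e.symm.injective h
    · intro m hm
      refine ⟨e m, ?_, by simp⟩
      simp only [Finset.mem_filter, Finset.mem_univ, true_and, Equiv.symm_apply_apply] at hm ⊢
      exact hm
  refine ⟨b0.reindex e, fun i => μit (e.symm i), ?_, ?_, ?_, ?_⟩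
  · intro i
    rw [Module.Basis.reindex_apply]
    have hb0 : ⇑b0 = VS := coe_basisOfLinearIndependentOfCardEqFinrank hli hcard
    rw [hb0]
    exact heig_master n a b hnn haa hbb hna hnb hab (e.symm i)
  · rw [htrans (fun x => 0 < x)]; exact count_pos
  · rw [htrans (fun x => x = 0)]; exact count_zero
  · rw [htrans (fun x => x < 0)]; exact count_neg
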